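/- Let A, A' be G-graded crossed products over a G-graded G-acted algebra 𝒞, and let M̃ be a G-graded (A,A')-bimodule over 𝒞 with identity component M = M̃_1. Then the wreath product M̃ ≀ S_n := M̃^{⊗n} ⊗ 𝒪S_n, with the action ((a_1⊗...⊗a_n)⊗σ)·((m̃_1⊗...⊗m̃_n)⊗τ)·((a'_1⊗...⊗a'_n)⊗π) = (a_1⊗...⊗a_n)·^σ(m̃_1⊗...⊗m̃_n)·^{στ}(a'_1⊗...⊗a'_n) ⊗ στπ, is a (G ≀ S_n)-graded (A ≀ S_n, A' ≀ S_n)-bimodule over 𝒞^{⊗n}, whose ((g_1,...,g_n),σ)-component is (M̃_{g_1}⊗...⊗M̃_{g_n}) ⊗ 𝒪σ. -/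

import Mathlib

open scoped TensorProduct

set_option synthInstance.maxHeartbeats 1000000
set_option maxHeartbeats 1000000

/-- `S_n` acting on `G^n` by permuting coordinates. -/
def permAut (G : Type*) [Group G] (n : ℕ) :
    Equiv.Perm (Fin n) →* MulAut (Fin n → G) where
  toFun σ :=
    { toFun := fun g i => g (σ⁻¹ i)
      invFun := fun g i => g (σ i)
      left_inv := fun g => by funext i; simp
      right_inv := fun g => by funext i; simp
      map_mul' := fun g h => rfl }
  map_one' := by ext g i; rfl
  map_mul' σ τ := by
    ext g i
    simp [MulAut.mul_apply, Equiv.Perm.mul_apply]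

/-- The wreath product `G ≀ S_n = G^n ⋊ S_n`. -/
abbrev Wr (G : Type*) [Group G] (n : ℕ) :=
  SemidirectProduct (Fin n → G) (Equiv.Perm (Fin n)) (permAut G n)

/-- The underlying `𝒪`-module `M^{⊗n} ⊗ 𝒪S_n` of a wreath product. -/
noncomputable abbrev WrMod (𝒪 M : Type*) [CommRing 𝒪] [AddCommGroup M]
    [Module 𝒪 M] (n : ℕ) :=
  (⨂[𝒪] _ : Fin n, M) ⊗[𝒪] MonoidAlgebra 𝒪 (Equiv.Perm (Fin n))

/-- the pure element `(m_1 ⊗ ... ⊗ m_n) ⊗ c·σ`. -/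
noncomputable def wrElt {𝒪 M : Type*} [CommRing 𝒪] [AddCommGroup M] [Module 𝒪 M]
    {n : ℕ} (m : Fin n → M) (σ : Equiv.Perm (Fin n)) (c : 𝒪) : WrMod 𝒪 M n :=
  (PiTensorProduct.tprod 𝒪 m) ⊗ₜ[𝒪] (MonoidAlgebra.single σ c)

noncomputable section WreathAux

open PiTensorProduct LinearMap

variable {𝒪 : Type*} [CommRing 𝒪] {n : ℕ}
variable {A B C M N : Type*} [AddCommGroup A] [Module 𝒪 A] [AddCommGroup B] [Module 𝒪 B]
  [AddCommGroup C] [Module 𝒪 C] [AddCommGroup M] [Module 𝒪 M] [AddCommGroup N] [Module 𝒪 N]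

/-- permutation action on `⨂ B`. -/
def permT (σ : Equiv.Perm (Fin n)) :
    (⨂[𝒪] _ : Fin n, B) →ₗ[𝒪] (⨂[𝒪] _ : Fin n, B) :=
  (PiTensorProduct.reindex 𝒪 (fun _ : Fin n => B) σ).toLinearMap

@[simp] lemma permT_tprod (σ : Equiv.Perm (Fin n)) (b : Fin n → B) :
    permT (𝒪 := 𝒪) σ (tprod 𝒪 b) = tprod 𝒪 (fun i => b (σ⁻¹ i)) := by
  simp [permT, PiTensorProduct.reindex_tprod]

/-- componentwise bilinear pairing on pi tensor products -/
def actT (f : A →ₗ[𝒪] B →ₗ[𝒪] C) :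
    (⨂[𝒪] _ : Fin n, A) →ₗ[𝒪] (⨂[𝒪] _ : Fin n, B) →ₗ[𝒪] (⨂[𝒪] _ : Fin n, C) :=
  PiTensorProduct.lift
    ((PiTensorProduct.mapMultilinear 𝒪 (fun _ : Fin n => B) (fun _ : Fin n => C)).compLinearMap
      (fun _ => f))

@[simp] lemma actT_tprod (f : A →ₗ[𝒪] B →ₗ[𝒪] C) (a : Fin n → A) (b : Fin n → B) :
    actT f (tprod 𝒪 a) (tprod 𝒪 b) = tprod 𝒪 (fun i => f (a i) (b i)) := by
  simp [actT]

/-- building block of the wreath action -/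
def wrPhi (f : A →ₗ[𝒪] B →ₗ[𝒪] C) (σ : Equiv.Perm (Fin n)) :
    (⨂[𝒪] _ : Fin n, A) →ₗ[𝒪] WrMod 𝒪 B n →ₗ[𝒪] WrMod 𝒪 C n where
  toFun ta := (rTensor _ (actT f ta ∘ₗ permT σ)) ∘ₗ
      (lTensor _ (mulLeft 𝒪 (MonoidAlgebra.single σ (1 : 𝒪))))
  map_add' x y := by
    simp only [map_add, add_comp, rTensor_add, comp_add]
  map_smul' r x := by
    simp only [map_smul, smul_comp, rTensor_smul, comp_smul, RingHom.id_apply]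

lemma wrPhi_tprod_wrElt (f : A →ₗ[𝒪] B →ₗ[𝒪] C) (σ τ : Equiv.Perm (Fin n))
    (a : Fin n → A) (b : Fin n → B) (e : 𝒪) :
    wrPhi f σ (tprod 𝒪 a) (wrElt b τ e) =
      wrElt (fun i => f (a i) (b (σ⁻¹ i))) (σ * τ) e := by
  simp only [wrPhi, wrElt, LinearMap.coe_mk, AddHom.coe_mk, comp_apply, lTensor_tmul,
    rTensor_tmul, mulLeft_apply, MonoidAlgebra.single_mul_single, one_mul, comp_apply,
    permT_tprod, actT_tprod]

/-- the wreath product action map -/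
def wrAct (f : A →ₗ[𝒪] B →ₗ[𝒪] C) :
    WrMod 𝒪 A n →ₗ[𝒪] WrMod 𝒪 B n →ₗ[𝒪] WrMod 𝒪 C n :=
  TensorProduct.lift (LinearMap.flip ((Finsupp.lsum 𝒪 fun σ =>
    LinearMap.toSpanSingleton 𝒪 _ (wrPhi f σ)) ∘ₗ
    (MonoidAlgebra.coeffLinearEquiv 𝒪).toLinearMap))

lemma wrAct_wrElt (f : A →ₗ[𝒪] B →ₗ[𝒪] C) (a : Fin n → A) (b : Fin n → B)
    (σ τ : Equiv.Perm (Fin n)) (c e : 𝒪) :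
    wrAct f (wrElt a σ c) (wrElt b τ e) =
      wrElt (fun i => f (a i) (b (σ⁻¹ i))) (σ * τ) (c * e) := by
  have h1 : wrAct f (wrElt a σ c) = c • (wrPhi f σ (tprod 𝒪 a)) := by
    simp only [wrAct, wrElt, TensorProduct.lift.tmul, flip_apply, LinearMap.comp_apply,
      LinearEquiv.coe_coe, MonoidAlgebra.coeffLinearEquiv_apply, MonoidAlgebra.coeff_single]
    erw [Finsupp.lsum_single]
    simp [LinearMap.toSpanSingleton_apply]
  rw [h1, LinearMap.smul_apply, wrPhi_tprod_wrElt]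
  simp only [wrElt, TensorProduct.tmul_smul]
  rw [← TensorProduct.tmul_smul, MonoidAlgebra.smul_single']

lemma wrElt_closure :
    AddSubmonoid.closure {x : WrMod 𝒪 M n | ∃ m σ c, x = wrElt m σ c} = ⊤ := by
  rw [eq_top_iff]
  rintro z -
  induction z using TensorProduct.induction_on with
  | zero => exact zero_mem _
  | add x y hx hy => exact add_mem hx hy
  | tmul t g =>
    induction t using PiTensorProduct.induction_on with
    | smul_tprod r m =>
      induction g using MonoidAlgebra.induction_linear with
      | zero => simp only [TensorProduct.tmul_zero]; exact zero_mem _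
      | add u v hu hv => rw [TensorProduct.tmul_add]; exact add_mem hu hv
      | single σ e =>
        refine AddSubmonoid.subset_closure ⟨m, σ, r * e, ?_⟩
        rw [wrElt, TensorProduct.smul_tmul]
        congr 1
        exact MonoidAlgebra.smul_single' r σ e
    | add x y hx hy =>
      rw [TensorProduct.add_tmul]; exact add_mem hx hy

lemma wrSpan_top :
    Submodule.span 𝒪 {x : WrMod 𝒪 M n | ∃ m σ c, x = wrElt m σ c} = ⊤ := by
  rw [eq_top_iff]
  intro z _
  have hz : z ∈ AddSubmonoid.closure {x : WrMod 𝒪 M n | ∃ m σ c, x = wrElt m σ c} := by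
    rw [wrElt_closure]; trivial
  refine AddSubmonoid.closure_induction (fun x hx => Submodule.subset_span hx)
    (zero_mem _) (fun x y _ _ hx hy => add_mem hx hy) hz

lemma wr_induction {P : WrMod 𝒪 M n → Prop} (h0 : P 0)
    (hadd : ∀ x y, P x → P y → P (x + y)) (helt : ∀ m σ c, P (wrElt m σ c)) :
    ∀ z, P z := by
  intro z
  have hz : z ∈ AddSubmonoid.closure {x : WrMod 𝒪 M n | ∃ m σ c, x = wrElt m σ c} := by
    rw [wrElt_closure]; trivial
  exact AddSubmonoid.closure_induction
    (fun x hx => by obtain ⟨m, σ, c, rfl⟩ := hx; exact helt m σ c)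
    h0 (fun x y _ _ hx hy => hadd x y hx hy) hz

lemma wr_ext {f g : WrMod 𝒪 M n →ₗ[𝒪] N}
    (h : ∀ m σ c, f (wrElt m σ c) = g (wrElt m σ c)) : f = g :=
  LinearMap.ext_on wrSpan_top (by rintro x ⟨m, σ, c, rfl⟩; exact h m σ c)

/-- projection onto the `σ`-coefficient of the group algebra -/
def projF (σ : Equiv.Perm (Fin n)) :
    MonoidAlgebra 𝒪 (Equiv.Perm (Fin n)) →ₗ[𝒪] MonoidAlgebra 𝒪 (Equiv.Perm (Fin n)) :=
  (MonoidAlgebra.lsingle σ : 𝒪 →ₗ[𝒪] MonoidAlgebra 𝒪 (Equiv.Perm (Fin n))) ∘ₗ (Finsupp.lapply σ : (Equiv.Perm (Fin n) →₀ 𝒪) →ₗ[𝒪] 𝒪) ∘ₗ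
    (MonoidAlgebra.coeffLinearEquiv 𝒪).toLinearMap

/-- projection onto a wreath component -/
def wrProj (p : Fin n → M →ₗ[𝒪] M) (σ : Equiv.Perm (Fin n)) :
    WrMod 𝒪 M n →ₗ[𝒪] WrMod 𝒪 M n :=
  TensorProduct.map (PiTensorProduct.map p) (projF σ)

lemma wrProj_wrElt (p : Fin n → M →ₗ[𝒪] M) (σ τ : Equiv.Perm (Fin n)) (m : Fin n → M) (c : 𝒪) :
    wrProj p σ (wrElt m τ c) =
      if τ = σ then wrElt (fun i => p i (m i)) σ c else 0 := by
  simp only [wrProj, wrElt, TensorProduct.map_tmul, PiTensorProduct.map_tprod]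
  have h2 : (projF σ : MonoidAlgebra 𝒪 (Equiv.Perm (Fin n)) →ₗ[𝒪] _)
      (MonoidAlgebra.single τ c) = MonoidAlgebra.single σ (if τ = σ then c else 0) := by
    simp [projF, Finsupp.single_apply]
  rw [h2]
  split
  · rfl
  · rw [MonoidAlgebra.single_zero]
    exact TensorProduct.tmul_zero _ _

end WreathAux

/-- The `((g_1,…,g_n),σ)`-component `(M_{g_1} ⊗ ... ⊗ M_{g_n}) ⊗ 𝒪σ`. -/
noncomputable def wrComp {𝒪 M G : Type*} [CommRing 𝒪] [AddCommGroup M] [Module 𝒪 M]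
    [Group G] {n : ℕ} (ℳ : G → Submodule 𝒪 M) (x : Wr G n) :
    Submodule 𝒪 (WrMod 𝒪 M n) :=
  Submodule.span 𝒪
    {m | ∃ (a : Fin n → M) (c : 𝒪), (∀ i, a i ∈ ℳ (x.left i)) ∧ m = wrElt a x.right c}

/-- `mul` is the wreath product multiplication on `A^{⊗n} ⊗ 𝒪S_n`. -/
noncomputable def IsWreathMul {𝒪 A : Type*} [CommRing 𝒪] [Ring A] [Algebra 𝒪 A]
    {n : ℕ} (mul : WrMod 𝒪 A n → WrMod 𝒪 A n → WrMod 𝒪 A n) : Prop :=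
  (∀ (a b : Fin n → A) (σ τ : Equiv.Perm (Fin n)) (c d : 𝒪),
    mul (wrElt a σ c) (wrElt b τ d) =
      wrElt (fun i => a i * b (σ⁻¹ i)) (σ * τ) (c * d)) ∧
  (∀ x y z, mul (mul x y) z = mul x (mul y z)) ∧
  (∀ x, mul (wrElt (fun _ => (1 : A)) 1 1) x = x) ∧
  (∀ x, mul x (wrElt (fun _ => (1 : A)) 1 1) = x) ∧
  (∀ x y z, mul x (y + z) = mul x y + mul x z) ∧
  (∀ x y z, mul (x + y) z = mul x z + mul y z) ∧
  (∀ (s : 𝒪) x y, mul (s • x) y = s • mul x y) ∧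
  (∀ (s : 𝒪) x y, mul x (s • y) = s • mul x y)

/-- A family of submodules is an algebra grading. -/
def IsAlgGrading {𝒪 M ι : Type*} [CommRing 𝒪] [AddCommGroup M] [Module 𝒪 M]
    [Monoid ι] [DecidableEq ι] (mul : M → M → M) (one : M)
    (𝒜 : ι → Submodule 𝒪 M) : Prop :=
  DirectSum.IsInternal 𝒜 ∧ one ∈ 𝒜 1 ∧
    ∀ g h a b, a ∈ 𝒜 g → b ∈ 𝒜 h → mul a b ∈ 𝒜 (g * h)

/-- every homogeneous component contains an invertible element. -/
def IsCrossed {𝒪 M ι : Type*} [CommRing 𝒪] [AddCommGroup M] [Module 𝒪 M]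
    [Group ι] (mul : M → M → M) (one : M) (𝒜 : ι → Submodule 𝒪 M) : Prop :=
  ∀ g : ι, ∃ u ∈ 𝒜 g, ∃ v ∈ 𝒜 g⁻¹, mul u v = one ∧ mul v u = one

set_option maxHeartbeats 2000000 in
/-- if `M̃` is a `G`-graded `(A,A')`-bimodule over `𝒞`, then
`M̃ ≀ S_n = M̃^{⊗n} ⊗ 𝒪S_n` is a `(G ≀ S_n)`-graded `(A ≀ S_n, A' ≀ S_n)`-bimodule
over `𝒞^{⊗n}`, with `((g_1,…,g_n),σ)`-component `(M̃_{g_1}⊗…⊗M̃_{g_n}) ⊗ 𝒪σ`. -/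
theorem wreath_bimodule (𝒪 : Type) [CommRing 𝒪]
    (G : Type) [Group G] [Finite G] [DecidableEq G]
    (n : ℕ) (hn : 0 < n) [DecidableEq (Wr G n)]
    -- the `G`-graded `G`-acted algebra `𝒞`
    (𝒞 : Type) [Ring 𝒞] [Algebra 𝒪 𝒞]
    (𝒢 : G → Submodule 𝒪 𝒞) (φC : G →* (𝒞 ≃ₐ[𝒪] 𝒞))
    (h𝒞 : IsAlgGrading (fun a b : 𝒞 => a * b) 1 𝒢)
    (h𝒞act : ∀ (g h : G), ∀ c ∈ 𝒢 h, φC g c ∈ 𝒢 (g * h * g⁻¹))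
    -- `A` and `A'`, `G`-graded crossed products over `𝒞` with structure maps `ζ`, `ζ'`
    (A A' : Type) [Ring A] [Ring A'] [Algebra 𝒪 A] [Algebra 𝒪 A']
    (𝒜 : G → Submodule 𝒪 A) (𝒜' : G → Submodule 𝒪 A')
    (hA : IsAlgGrading (fun a b : A => a * b) 1 𝒜)
    (hA' : IsAlgGrading (fun a b : A' => a * b) 1 𝒜')
    (hcA : IsCrossed (fun a b : A => a * b) 1 𝒜)
    (hcA' : IsCrossed (fun a b : A' => a * b) 1 𝒜')
    (ζ : 𝒞 →ₐ[𝒪] A) (ζ' : 𝒞 →ₐ[𝒪] A')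
    (hζcent : ∀ c : 𝒞, ∀ b ∈ 𝒜 1, ζ c * b = b * ζ c)
    (hζ'cent : ∀ c : 𝒞, ∀ b ∈ 𝒜' 1, ζ' c * b = b * ζ' c)
    (hζgr : ∀ (h : G), ∀ c ∈ 𝒢 h, ζ c ∈ 𝒜 h)
    (hζ'gr : ∀ (h : G), ∀ c ∈ 𝒢 h, ζ' c ∈ 𝒜' h)
    (hζeq : ∀ (g : G) (c : 𝒞) (u v : A), u ∈ 𝒜 g → v ∈ 𝒜 g⁻¹ →
      u * v = 1 → v * u = 1 → u * ζ c * v = ζ (φC g c))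
    (hζ'eq : ∀ (g : G) (c : 𝒞) (u v : A'), u ∈ 𝒜' g → v ∈ 𝒜' g⁻¹ →
      u * v = 1 → v * u = 1 → u * ζ' c * v = ζ' (φC g c))
    -- the `G`-graded `(A,A')`-bimodule `M̃` over `𝒞`
    (M : Type) [AddCommGroup M] [Module 𝒪 M]
    (sl : A →ₗ[𝒪] M →ₗ[𝒪] M) (sr : A' →ₗ[𝒪] M →ₗ[𝒪] M)
    (hsl1 : sl 1 = LinearMap.id) (hslm : ∀ a b : A, sl (a * b) = sl a ∘ₗ sl b)
    (hsr1 : sr 1 = LinearMap.id) (hsrm : ∀ a b : A', sr (a * b) = sr b ∘ₗ sr a)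
    (hcomm : ∀ (a : A) (a' : A'), sl a ∘ₗ sr a' = sr a' ∘ₗ sl a)
    (ℳ : G → Submodule 𝒪 M) (hint : DirectSum.IsInternal ℳ)
    (hgrl : ∀ (g x : G), ∀ a ∈ 𝒜 g, ∀ m ∈ ℳ x, sl a m ∈ ℳ (g * x))
    (hgrr : ∀ (x h : G), ∀ a ∈ 𝒜' h, ∀ m ∈ ℳ x, sr a m ∈ ℳ (x * h))
    (hoverC : ∀ (g : G), ∀ m ∈ ℳ g, ∀ c : 𝒞, sr (ζ' c) m = sl (ζ (φC g c)) m)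
    -- the wreath product algebras `A ≀ S_n` and `A' ≀ S_n`
    (mulW : WrMod 𝒪 A n → WrMod 𝒪 A n → WrMod 𝒪 A n) (hW : IsWreathMul mulW)
    (mulW' : WrMod 𝒪 A' n → WrMod 𝒪 A' n → WrMod 𝒪 A' n) (hW' : IsWreathMul mulW') :
    -- conclusion: `M̃ ≀ S_n` is a `(G ≀ S_n)`-graded bimodule over `𝒞^{⊗n}`
    ∃ (SL : WrMod 𝒪 A n → WrMod 𝒪 M n → WrMod 𝒪 M n)
      (SR : WrMod 𝒪 M n → WrMod 𝒪 A' n → WrMod 𝒪 M n),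
      -- the defining formulas on pure elements
      (∀ (a : Fin n → A) (m : Fin n → M) (σ τ : Equiv.Perm (Fin n)) (c e : 𝒪),
        SL (wrElt a σ c) (wrElt m τ e) =
          wrElt (fun i => sl (a i) (m (σ⁻¹ i))) (σ * τ) (c * e)) ∧
      (∀ (m : Fin n → M) (a' : Fin n → A') (τ π : Equiv.Perm (Fin n)) (e f : 𝒪),
        SR (wrElt m τ e) (wrElt a' π f) =
          wrElt (fun i => sr (a' (τ⁻¹ i)) (m i)) (τ * π) (e * f)) ∧
      -- `M̃ ≀ S_n` is an `(A ≀ S_n, A' ≀ S_n)`-bimodule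
      (∀ m, SL (wrElt (fun _ => (1 : A)) 1 1) m = m) ∧
      (∀ x y m, SL (mulW x y) m = SL x (SL y m)) ∧
      (∀ m, SR m (wrElt (fun _ => (1 : A')) 1 1) = m) ∧
      (∀ m x y, SR m (mulW' x y) = SR (SR m x) y) ∧
      (∀ x m y, SR (SL x m) y = SL x (SR m y)) ∧
      (∀ x m m', SL x (m + m') = SL x m + SL x m') ∧
      (∀ x y m, SL (x + y) m = SL x m + SL y m) ∧
      (∀ m m' y, SR (m + m') y = SR m y + SR m' y) ∧
      (∀ m x y, SR m (x + y) = SR m x + SR m y) ∧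
      (∀ (s : 𝒪) x m, SL (s • x) m = s • SL x m) ∧
      (∀ (s : 𝒪) x m, SL x (s • m) = s • SL x m) ∧
      (∀ (s : 𝒪) m y, SR (s • m) y = s • SR m y) ∧
      (∀ (s : 𝒪) m y, SR m (s • y) = s • SR m y) ∧
      -- the `(G ≀ S_n)`-grading
      DirectSum.IsInternal (fun x : Wr G n => wrComp ℳ x) ∧
      (∀ (x y : Wr G n), ∀ u ∈ wrComp 𝒜 x, ∀ m ∈ wrComp ℳ y,
        SL u m ∈ wrComp ℳ (x * y)) ∧
      (∀ (y x : Wr G n), ∀ m ∈ wrComp ℳ y, ∀ u ∈ wrComp 𝒜' x,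
        SR m u ∈ wrComp ℳ (y * x)) ∧
      -- `M̃ ≀ S_n` is a bimodule over `𝒞^{⊗n}`
      (∀ (x : Wr G n), ∀ m ∈ wrComp ℳ x, ∀ c : Fin n → 𝒞,
        SR m (wrElt (fun i => ζ' (c i)) 1 1) =
          SL (wrElt (fun i => ζ (φC (x.left i) (c (x.right⁻¹ i)))) 1 1) m) := by
  classical
  obtain ⟨hWf, hWassoc, hW1l, hW1r, hWaddr, hWaddl, hWsmull, hWsmulr⟩ := hW
  obtain ⟨hW'f, hW'assoc, hW'1l, hW'1r, hW'addr, hW'addl, hW'smull, hW'smulr⟩ := hW'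
  have hW0r : ∀ x, mulW x 0 = 0 := fun x => by
    have h := hWaddr x 0 0; rw [add_zero] at h; exact (left_eq_add.mp h)
  have hW0l : ∀ y, mulW 0 y = 0 := fun y => by
    have h := hWaddl 0 0 y; rw [add_zero] at h; exact (left_eq_add.mp h)
  have hW'0r : ∀ x, mulW' x 0 = 0 := fun x => by
    have h := hW'addr x 0 0; rw [add_zero] at h; exact (left_eq_add.mp h)
  have hW'0l : ∀ y, mulW' 0 y = 0 := fun y => by
    have h := hW'addl 0 0 y; rw [add_zero] at h; exact (left_eq_add.mp h)
  have hslap : ∀ (a b : A) (m : M), sl (a * b) m = sl a (sl b m) := fun a b m => by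
    rw [hslm]; rfl
  have hsrap : ∀ (a b : A') (m : M), sr (a * b) m = sr b (sr a m) := fun a b m => by
    rw [hsrm]; rfl
  have hcommap : ∀ (a : A) (a' : A') (m : M), sl a (sr a' m) = sr a' (sl a m) :=
    fun a a' m => DFunLike.congr_fun (hcomm a a') m
  refine ⟨fun x m => wrAct sl x m, fun m y => wrAct sr.flip m y,
    ?f1, ?f2, ?one_l, ?assoc_l, ?one_r, ?assoc_r, ?mixed, ?a1, ?a2, ?a3, ?a4,
    ?s1, ?s2, ?s3, ?s4, ?internal, ?grl, ?grr, ?overC⟩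
  case f1 => intro a m σ τ c e; exact wrAct_wrElt sl a m σ τ c e
  case f2 =>
    intro m a' τ π e f
    simpa [LinearMap.flip_apply] using wrAct_wrElt sr.flip m a' τ π e f
  case one_l =>
    have h : wrAct sl (wrElt (n := n) (fun _ => (1 : A)) 1 1) = LinearMap.id := by
      apply wr_ext
      intro m τ e
      rw [wrAct_wrElt]
      simp [hsl1]
    intro m; exact DFunLike.congr_fun h m
  case one_r =>
    have h : (wrAct (sr.flip)).flip (wrElt (n := n) (fun _ => (1 : A')) 1 1) = LinearMap.id := by
      apply wr_ext
      intro m τ e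
      rw [LinearMap.flip_apply, wrAct_wrElt]
      simp [hsr1]
    intro m; exact DFunLike.congr_fun h m
  case assoc_l =>
    have key : ∀ x y, wrAct sl (mulW x y) = (wrAct sl x) ∘ₗ (wrAct sl y) := by
      intro x y
      induction x using wr_induction with
      | h0 => simp [hW0l, LinearMap.zero_comp]
      | hadd u v hu hv => rw [hWaddl, map_add, map_add, hu, hv, LinearMap.add_comp]
      | helt a σ c =>
        induction y using wr_induction with
        | h0 => simp [hW0r, LinearMap.comp_zero]
        | hadd u v hu hv => rw [hWaddr, map_add, map_add, hu, hv, LinearMap.comp_add]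
        | helt b τ d =>
          rw [hWf]
          apply wr_ext
          intro m π e
          rw [wrAct_wrElt, LinearMap.comp_apply, wrAct_wrElt, wrAct_wrElt]
          simp only [hslap, mul_inv_rev, Equiv.Perm.mul_apply, mul_assoc]
    intro x y m; exact DFunLike.congr_fun (key x y) m
  case assoc_r =>
    have key : ∀ x y, (wrAct sr.flip).flip (mulW' x y) =
        ((wrAct sr.flip).flip y) ∘ₗ ((wrAct sr.flip).flip x) := by
      intro x y
      induction x using wr_induction with
      | h0 => simp [hW'0l, LinearMap.comp_zero]
      | hadd u v hu hv => rw [hW'addl, map_add, map_add, hu, hv, LinearMap.comp_add]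
      | helt a σ c =>
        induction y using wr_induction with
        | h0 => simp [hW'0r, LinearMap.zero_comp]
        | hadd u v hu hv => rw [hW'addr, map_add, map_add, hu, hv, LinearMap.add_comp]
        | helt b τ d =>
          rw [hW'f]
          apply wr_ext
          intro m π e
          rw [LinearMap.comp_apply, LinearMap.flip_apply, LinearMap.flip_apply,
            LinearMap.flip_apply, wrAct_wrElt, wrAct_wrElt, wrAct_wrElt]
          simp only [LinearMap.flip_apply, hsrap, mul_inv_rev, Equiv.Perm.mul_apply, mul_assoc]
    intro m x y; exact DFunLike.congr_fun (key x y) m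
  case mixed =>
    have key : ∀ (x : WrMod 𝒪 A n) (y : WrMod 𝒪 A' n),
        ((wrAct sr.flip).flip y) ∘ₗ (wrAct sl x) =
        (wrAct sl x) ∘ₗ ((wrAct sr.flip).flip y) := by
      intro x y
      induction x using wr_induction with
      | h0 => simp [LinearMap.comp_zero, LinearMap.zero_comp]
      | hadd u v hu hv =>
        rw [map_add, LinearMap.comp_add, LinearMap.add_comp, hu, hv]
      | helt a σ c =>
        induction y using wr_induction with
        | h0 => simp [LinearMap.comp_zero, LinearMap.zero_comp]
        | hadd u v hu hv =>
          rw [map_add, LinearMap.comp_add, LinearMap.add_comp, hu, hv]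
        | helt b τ d =>
          apply wr_ext
          intro m π e
          rw [LinearMap.comp_apply, LinearMap.comp_apply, LinearMap.flip_apply,
            LinearMap.flip_apply, wrAct_wrElt, wrAct_wrElt, wrAct_wrElt, wrAct_wrElt]
          simp only [LinearMap.flip_apply, hcommap, mul_inv_rev, Equiv.Perm.mul_apply, mul_assoc]
    intro x m y; exact DFunLike.congr_fun (key x y) m
  case a1 => intro x m m'; exact map_add (wrAct sl x) m m'
  case a2 => intro x y m; exact DFunLike.congr_fun (map_add (wrAct sl) x y) m
  case a3 => intro m m' y; exact DFunLike.congr_fun (map_add (wrAct sr.flip) m m') y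
  case a4 => intro m x y; exact map_add (wrAct sr.flip m) x y
  case s1 => intro s x m; exact DFunLike.congr_fun (map_smul (wrAct sl) s x) m
  case s2 => intro s x m; exact map_smul (wrAct sl x) s m
  case s3 => intro s m y; exact DFunLike.congr_fun (map_smul (wrAct sr.flip) s m) y
  case s4 => intro s m y; exact map_smul (wrAct sr.flip m) s y
  case internal =>
    haveI : Fintype G := Fintype.ofFinite G
    let E := LinearEquiv.ofBijective (DirectSum.coeLinearMap ℳ) hint
    let p : G → M →ₗ[𝒪] M := fun g =>
      (ℳ g).subtype ∘ₗ (DirectSum.component 𝒪 G (fun g => ↥(ℳ g)) g) ∘ₗ E.symm.toLinearMap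
    have hp_apply : ∀ g m, p g m = ((E.symm m) g : M) := fun g m => rfl
    have hp_mem : ∀ g m, p g m ∈ ℳ g := fun g m => by
      rw [hp_apply g m]; exact Submodule.coe_mem _
    have hp_same : ∀ g m, ∀ _ : m ∈ ℳ g, p g m = m := fun g m hm => by
      rw [hp_apply g m]
      show ((LinearEquiv.ofBijective (DirectSum.coeLinearMap ℳ) hint).symm m g : M) = m
      rw [hint.ofBijective_coeLinearMap_of_mem hm]
    have hp_other : ∀ g h m, m ∈ ℳ h → h ≠ g → p g m = 0 := fun g h m hm hne => by
      rw [hp_apply g m]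
      show ((LinearEquiv.ofBijective (DirectSum.coeLinearMap ℳ) hint).symm m g : M) = 0
      have hm' : m = ((⟨m, hm⟩ : ℳ h) : M) := rfl
      rw [hm', hint.ofBijective_coeLinearMap_of_ne hne]
      simp
    have hp_sum : ∀ m, (∑ g : G, p g m) = m := fun m => by
      have h1 : ∑ g : G, p g m = DirectSum.coeLinearMap ℳ (E.symm m) := by
        conv_rhs => rw [← DirectSum.sum_univ_of (E.symm m)]
        rw [map_sum]
        refine Finset.sum_congr rfl fun g _ => ?_
        rw [hp_apply g m, DirectSum.coeLinearMap_of]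
      rw [h1]
      exact E.apply_symm_apply m
    have hPid : ∀ x : Wr G n, ∀ u ∈ wrComp ℳ x,
        wrProj (fun i => p (x.left i)) x.right u = u := by
      intro x u hu
      refine Submodule.span_induction ?_ (map_zero _)
        (fun a b _ _ ha hb => by rw [map_add, ha, hb])
        (fun r a _ ha => by rw [map_smul, ha]) hu
      rintro u ⟨a, c, ha, rfl⟩
      rw [wrProj_wrElt, if_pos rfl]
      have hfn : (fun i => p (x.left i) (a i)) = a := funext fun i => hp_same _ _ (ha i)
      rw [hfn]
    have hPzero : ∀ x y : Wr G n, y ≠ x → ∀ u ∈ wrComp ℳ y,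
        wrProj (fun i => p (x.left i)) x.right u = 0 := by
      intro x y hyx u hu
      refine Submodule.span_induction ?_ (map_zero _)
        (fun a b _ _ ha hb => by rw [map_add, ha, hb, add_zero])
        (fun r a _ ha => by rw [map_smul, ha, smul_zero]) hu
      rintro u ⟨a, c, ha, rfl⟩
      rw [wrProj_wrElt]
      by_cases hr : y.right = x.right
      · rw [if_pos hr]
        have hl : y.left ≠ x.left := fun hL => hyx (SemidirectProduct.ext hL hr)
        obtain ⟨i, hi⟩ := Function.ne_iff.mp hl
        have hzero : p (x.left i) (a i) = 0 := hp_other _ _ _ (ha i) hi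
        have hfn : (fun j => p (x.left j) (a j)) =
            Function.update (fun j => p (x.left j) (a j)) i 0 := by
          funext j
          rcases eq_or_ne j i with rfl | hj
          · rw [Function.update_self]; exact hzero
          · rw [Function.update_of_ne hj]
        show (PiTensorProduct.tprod 𝒪 (fun j => p (x.left j) (a j))) ⊗ₜ[𝒪]
          (MonoidAlgebra.single x.right c) = 0
        rw [hfn, MultilinearMap.map_update_zero]
        exact TensorProduct.zero_tmul _ _
      · rw [if_neg hr]
    refine DirectSum.isInternal_submodule_of_iSupIndep_of_iSup_eq_top ?_ ?_
    · intro x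
      rw [Submodule.disjoint_def]
      intro u hu hu'
      have h1 : wrProj (fun i => p (x.left i)) x.right u = u := hPid x u hu
      have h2 : wrProj (fun i => p (x.left i)) x.right u = 0 := by
        have hle : (⨆ (y : Wr G n) (_ : y ≠ x), wrComp ℳ y) ≤
            LinearMap.ker (wrProj (fun i => p (x.left i)) x.right) := by
          refine iSup_le fun y => iSup_le fun hy => ?_
          intro v hv
          exact LinearMap.mem_ker.mpr (hPzero x y hy v hv)
        exact LinearMap.mem_ker.mp (hle hu')
      rw [← h1, h2]
    · rw [eq_top_iff]
      intro z _
      refine wr_induction (zero_mem _) (fun a b ha hb => add_mem ha hb) ?_ z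
      intro m τ c
      have hdec : (PiTensorProduct.tprod 𝒪 m) =
          ∑ g : Fin n → G, PiTensorProduct.tprod 𝒪 (fun i => p (g i) (m i)) := by
        conv_lhs => rw [show m = fun i => ∑ g : G, p g (m i) from
          funext fun i => (hp_sum (m i)).symm]
        exact MultilinearMap.map_sum _ _
      have heq : wrElt m τ c = ∑ g : Fin n → G, wrElt (fun i => p (g i) (m i)) τ c := by
        show PiTensorProduct.tprod 𝒪 m ⊗ₜ[𝒪] MonoidAlgebra.single τ c = _
        rw [hdec, TensorProduct.sum_tmul]
        rfl
      rw [heq]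
      refine Submodule.sum_mem _ fun g _ => ?_
      have hmem : wrElt (fun i => p (g i) (m i)) τ c ∈ wrComp ℳ (⟨g, τ⟩ : Wr G n) :=
        Submodule.subset_span ⟨_, c, fun i => hp_mem _ _, rfl⟩
      exact (le_iSup (fun x : Wr G n => wrComp ℳ x) (⟨g, τ⟩ : Wr G n)) hmem
  case grl =>
    intro x y u hu m hm
    refine Submodule.span_induction ?_ ?_ ?_ ?_ hu
    · rintro u' ⟨a, c, ha, rfl⟩
      refine Submodule.span_induction ?_ ?_ ?_ ?_ hm
      · rintro m' ⟨b, e, hb, rfl⟩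
        show wrAct sl (wrElt a x.right c) (wrElt b y.right e) ∈ _
        rw [wrAct_wrElt]
        refine Submodule.subset_span ⟨_, c * e, fun i => ?_, rfl⟩
        exact hgrl _ _ _ (ha i) _ (hb _)
      · show wrAct sl (wrElt a x.right c) (0 : WrMod 𝒪 M n) ∈ _
        rw [map_zero]; exact zero_mem _
      · intro m1 m2 _ _ h1 h2
        show wrAct sl (wrElt a x.right c) (m1 + m2) ∈ _
        rw [map_add]; exact add_mem h1 h2
      · intro r m1 _ h1
        show wrAct sl (wrElt a x.right c) (r • m1) ∈ _
        rw [map_smul]; exact Submodule.smul_mem _ r h1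
    · show wrAct sl (0 : WrMod 𝒪 A n) m ∈ _
      rw [map_zero]; exact zero_mem _
    · intro u1 u2 _ _ h1 h2
      show wrAct sl (u1 + u2) m ∈ _
      rw [map_add, LinearMap.add_apply]; exact add_mem h1 h2
    · intro r u1 _ h1
      show wrAct sl (r • u1) m ∈ _
      rw [map_smul, LinearMap.smul_apply]; exact Submodule.smul_mem _ r h1
  case grr =>
    intro y x m hm u hu
    refine Submodule.span_induction ?_ ?_ ?_ ?_ hm
    · rintro m' ⟨b, e, hb, rfl⟩
      refine Submodule.span_induction ?_ ?_ ?_ ?_ hu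
      · rintro u' ⟨a, f, ha, rfl⟩
        show wrAct sr.flip (wrElt b y.right e) (wrElt a x.right f) ∈ _
        rw [wrAct_wrElt]
        refine Submodule.subset_span ⟨_, e * f, fun i => ?_, rfl⟩
        show sr (a (y.right⁻¹ i)) (b i) ∈ ℳ ((y * x).left i)
        exact hgrr _ _ _ (ha _) _ (hb i)
      · show wrAct sr.flip (wrElt b y.right e) (0 : WrMod 𝒪 A' n) ∈ _
        rw [map_zero]; exact zero_mem _
      · intro u1 u2 _ _ h1 h2
        show wrAct sr.flip (wrElt b y.right e) (u1 + u2) ∈ _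
        rw [map_add]; exact add_mem h1 h2
      · intro r u1 _ h1
        show wrAct sr.flip (wrElt b y.right e) (r • u1) ∈ _
        rw [map_smul]; exact Submodule.smul_mem _ r h1
    · show wrAct sr.flip (0 : WrMod 𝒪 M n) u ∈ _
      rw [map_zero]; exact zero_mem _
    · intro m1 m2 _ _ h1 h2
      show wrAct sr.flip (m1 + m2) u ∈ _
      rw [map_add, LinearMap.add_apply]; exact add_mem h1 h2
    · intro r m1 _ h1
      show wrAct sr.flip (r • m1) u ∈ _
      rw [map_smul, LinearMap.smul_apply]; exact Submodule.smul_mem _ r h1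
  case overC =>
    intro x m hm c
    refine Submodule.span_induction ?_ ?_ ?_ ?_ hm
    · rintro m' ⟨a, e, ha, rfl⟩
      show wrAct sr.flip (wrElt a x.right e) (wrElt (fun i => ζ' (c i)) 1 1) =
        wrAct sl (wrElt (fun i => ζ (φC (x.left i) (c (x.right⁻¹ i)))) 1 1) (wrElt a x.right e)
      rw [wrAct_wrElt, wrAct_wrElt]
      rw [mul_one, one_mul, mul_one, one_mul]
      have hfn : (fun i => sr.flip (a i) (ζ' (c (x.right⁻¹ i)))) =
          (fun i => sl (ζ (φC (x.left i) (c (x.right⁻¹ i)))) (a ((1 : Equiv.Perm (Fin n))⁻¹ i))) := by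
        funext i
        show sr (ζ' (c (x.right⁻¹ i))) (a i) =
          sl (ζ (φC (x.left i) (c (x.right⁻¹ i)))) (a ((1 : Equiv.Perm (Fin n))⁻¹ i))
        rw [show ((1 : Equiv.Perm (Fin n))⁻¹ i) = i from by simp]
        exact hoverC (x.left i) (a i) (ha i) (c (x.right⁻¹ i))
      rw [hfn]
    · show wrAct sr.flip (0 : WrMod 𝒪 M n) (wrElt (fun i => ζ' (c i)) 1 1) =
        wrAct sl (wrElt (fun i => ζ (φC (x.left i) (c (x.right⁻¹ i)))) 1 1) (0 : WrMod 𝒪 M n)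
      rw [map_zero, LinearMap.zero_apply, map_zero]
    · intro m1 m2 _ _ h1 h2
      have h1' : wrAct sr.flip m1 (wrElt (fun i => ζ' (c i)) 1 1) =
        wrAct sl (wrElt (fun i => ζ (φC (x.left i) (c (x.right⁻¹ i)))) 1 1) m1 := h1
      have h2' : wrAct sr.flip m2 (wrElt (fun i => ζ' (c i)) 1 1) =
        wrAct sl (wrElt (fun i => ζ (φC (x.left i) (c (x.right⁻¹ i)))) 1 1) m2 := h2
      show wrAct sr.flip (m1 + m2) (wrElt (fun i => ζ' (c i)) 1 1) =
        wrAct sl (wrElt (fun i => ζ (φC (x.left i) (c (x.right⁻¹ i)))) 1 1) (m1 + m2)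
      rw [map_add, LinearMap.add_apply, map_add, h1', h2']
    · intro r m1 _ h1
      have h1' : wrAct sr.flip m1 (wrElt (fun i => ζ' (c i)) 1 1) =
        wrAct sl (wrElt (fun i => ζ (φC (x.left i) (c (x.right⁻¹ i)))) 1 1) m1 := h1
      show wrAct sr.flip (r • m1) (wrElt (fun i => ζ' (c i)) 1 1) =
        wrAct sl (wrElt (fun i => ζ (φC (x.left i) (c (x.right⁻¹ i)))) 1 1) (r • m1)
      rw [map_smul, LinearMap.smul_apply, map_smul, h1']
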